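/- Let t₁, t₂, …, tₙ be real numbers, congruent to one another modulo ℤ, with t₂ > t₃ > … > t_{n−1} > |tₙ|, and let t⁻ := (t₁, …, tₙ, −tₙ, …, −t₁) be the sequence of length 2n. Apply the Robinson–Schensted row insertion algorithm to t⁻ and let P(t⁻) be the resulting tableau. If −|tₙ| < t₁ ≤ t₂, then P(t⁻) has shape [2², 1^{2n−4}] or [2³, 1^{2n−6}]. If t₁ ≤ −|tₙ|, then P(t⁻) has shape [3, 1^{2n−3}] or [4, 1^{2n−4}]. -/

import Mathlib

/-! ## The Robinson–Schensted insertion algorithm -/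

section RS

variable {α : Type*} [LinearOrder α]

/-- Robinson–Schensted row insertion: insert `x` into a (weakly increasing) row,
bumping the first entry which is strictly greater than `x`. -/
def rowInsert : List α → α → List α × Option α
  | [], x => ([x], none)
  | y :: ys, x =>
    if x < y then (x :: ys, some y)
    else
      let p := rowInsert ys x
      (y :: p.1, p.2)

/-- Insert an entry into a tableau (recorded as its list of rows), bumping rows downwards. -/
def tableauInsert : List (List α) → α → List (List α)
  | [], x => [[x]]
  | r :: rs, x =>
    match rowInsert r x with
    | (r', none) => r' :: rs
    | (r', some y) => r' :: tableauInsert rs y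

/-- The Robinson–Schensted insertion tableau `P(w)` of a word `w`. -/
def RS (w : List α) : List (List α) := w.foldl tableauInsert []

/-- The shape `𝐩(w)` of the Robinson–Schensted tableau `P(w)`: its list of row lengths. -/
def RSshape (w : List α) : List ℕ := (RS w).map List.length

/-- The length of the `j`-th column (`j = 1, 2, …`) of the tableau `P(w)`. -/
def RScol (w : List α) (j : ℕ) : ℕ := ((RS w).filter fun r => j ≤ r.length).length

end RS

/-- For `λ = (t₁, …, tₙ)`, the sequence `λ⁻ = (t₁, …, tₙ, −tₙ, …, −t₁)`. -/
def minusSeq {α : Type*} [Neg α] (w : List α) : List α := w ++ w.reverse.map (fun x => -x)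


namespace RSAux

open List

/-- A single-column tableau. -/
def colOf (C : List ℝ) : List (List ℝ) := C.map (fun c => [c])

/-- Last element with default. -/
def lastD : List ℝ → ℝ → ℝ
  | [], d => d
  | x :: L, _ => lastD L x

@[simp] lemma lastD_nil (d : ℝ) : lastD [] d = d := rfl
@[simp] lemma lastD_cons (x : ℝ) (L : List ℝ) (d : ℝ) : lastD (x :: L) d = lastD L x := rfl

/-- Result of bumping a decreasing sequence into a column. -/
def aux : List ℝ → ℝ → List ℝ → List ℝ
  | [], _, C => C
  | x :: L, d, C => aux L x (d :: C)

@[simp] lemma aux_nil (d : ℝ) (C : List ℝ) : aux [] d C = C := rfl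
@[simp] lemma aux_cons (x : ℝ) (L : List ℝ) (d : ℝ) (C : List ℝ) :
    aux (x :: L) d C = aux L x (d :: C) := rfl

lemma aux_length : ∀ (L : List ℝ) (d : ℝ) (C : List ℝ),
    (aux L d C).length = L.length + C.length
  | [], _, _ => by simp
  | x :: L, d, C => by
    rw [aux_cons, aux_length L x (d :: C)]; simp; omega

lemma aux_head_mem : ∀ (L : List ℝ) (d : ℝ) (C : List ℝ), L ≠ [] →
    ∀ c ∈ (aux L d C).head?, c ∈ d :: L
  | [x], d, C, _, c, hc => by
    simp at hc; subst hc; simp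
  | x :: y :: L, d, C, _, c, hc => by
    rw [aux_cons] at hc
    have := aux_head_mem (y :: L) x (d :: C) (by simp) c hc
    simp at this ⊢; tauto

lemma aux_head_gt : ∀ (L : List ℝ) (d : ℝ) (C : List ℝ),
    (d :: L).Chain' (· > ·) → (∀ c ∈ C.head?, d < c) →
    ∀ c ∈ (aux L d C).head?, lastD L d < c
  | [], d, C, _, hC, c, hc => by simpa using hC c hc
  | x :: L, d, C, h, hC, c, hc => by
    rw [aux_cons] at hc
    have := aux_head_gt L x (d :: C) h.tail (by simpa using (List.isChain_cons_cons.1 h).1) c hc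
    simpa using this

lemma aux_chain : ∀ (L : List ℝ) (d : ℝ) (C : List ℝ),
    (d :: L).Chain' (· > ·) → C.Chain' (· < ·) → (∀ c ∈ C.head?, d < c) →
    (aux L d C).Chain' (· < ·)
  | [], _, _, _, hC, _ => hC
  | x :: L, d, C, h, hC, hd => by
    rw [aux_cons]
    exact aux_chain L x (d :: C) h.tail
      (List.isChain_cons.2 ⟨hd, hC⟩) (by simpa using (List.isChain_cons_cons.1 h).1)

lemma lastD_mem_of_ne_nil : ∀ (L : List ℝ) (d : ℝ), L ≠ [] → lastD L d ∈ L
  | [x], d, _ => by simp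
  | x :: y :: L, d, _ => by
    have := lastD_mem_of_ne_nil (y :: L) x (by simp)
    simp at this ⊢; tauto

lemma lastD_mem : ∀ (L : List ℝ) (d : ℝ), lastD L d = d ∨ lastD L d ∈ L
  | [], d => Or.inl rfl
  | x :: L, d => Or.inr (lastD_mem_of_ne_nil _ _ (by simp))

lemma chain_head_gt : ∀ (L : List ℝ) (d : ℝ), (d :: L).Chain' (· > ·) →
    ∀ x ∈ L, x < d
  | [], _, _, x, hx => by simp at hx
  | y :: L, d, h, x, hx => by
    rcases List.mem_cons.1 hx with rfl | hx
    · exact (List.isChain_cons_cons.1 h).1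
    · exact lt_trans (chain_head_gt L y h.tail x hx) (List.isChain_cons_cons.1 h).1

lemma lastD_le_chain : ∀ (L : List ℝ) (d : ℝ), (d :: L).Chain' (· > ·) →
    ∀ x ∈ d :: L, lastD L d ≤ x
  | [], d, _, x, hx => by simp at hx; simp [hx]
  | y :: L, d, h, x, hx => by
    have IH := lastD_le_chain L y h.tail
    have h1 : lastD L y ≤ y := IH y (by simp)
    rcases List.mem_cons.1 hx with rfl | hx
    · have h2 : y < x := (List.isChain_cons_cons.1 h).1
      rw [lastD_cons]; linarith
    · simpa using IH x hx

lemma colOf_shape (C : List ℝ) : (colOf C).map List.length = List.replicate C.length 1 := by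
  induction C with
  | nil => rfl
  | cons c C ih => simp [colOf, List.replicate] at ih ⊢; exact ih

lemma colShift : ∀ (C : List ℝ), C.Chain' (· < ·) → ∀ x, (∀ c ∈ C.head?, x < c) →
    tableauInsert (colOf C) x = colOf (x :: C)
  | [], _, x, _ => rfl
  | c :: C, hC, x, hx => by
    have hxc : x < c := hx c (by simp)
    have IH := colShift C hC.tail c (by simpa using (List.isChain_cons.1 hC).1)
    simp only [colOf, List.map_cons] at IH ⊢
    rw [tableauInsert, rowInsert, if_pos hxc]
    simpa using IH

lemma colPlace (k : ℝ) (K : List ℝ) (x : ℝ) (h : ¬ x < k) :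
    tableauInsert (colOf (k :: K)) x = [k, x] :: colOf K := by
  simp only [colOf, List.map_cons]
  rw [tableauInsert, rowInsert, if_neg h]
  rfl


/-- Phase where new entries bump the first entry of the first row. -/
lemma phase2 : ∀ (L : List ℝ) (d : ℝ) (rest C : List ℝ),
    C.Chain' (· < ·) → (d :: L).Chain' (· > ·) → (∀ c ∈ C.head?, d < c) →
    List.foldl tableauInsert ((d :: rest) :: colOf C) L
      = (lastD L d :: rest) :: colOf (aux L d C)
  | [], d, rest, C, _, _, _ => by simp
  | x :: L, d, rest, C, hC, hL, hd => by
    have hxd : x < d := (List.isChain_cons.1 hL).1 x rfl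
    have step : tableauInsert ((d :: rest) :: colOf C) x
        = (x :: rest) :: colOf (d :: C) := by
      rw [tableauInsert, rowInsert, if_pos hxd]
      simp [colShift C hC d hd]
    rw [List.foldl_cons, step]
    rw [phase2 L x rest (d :: C) (List.isChain_cons.2 ⟨hd, hC⟩) hL.tail
      (by simpa using hxd)]
    simp

/-- Phase where new entries bump the second entry of the first row `[s, b]`. -/
lemma phase1 : ∀ (L : List ℝ) (s b : ℝ) (C : List ℝ),
    C.Chain' (· < ·) → (b :: L).Chain' (· > ·) → (∀ x ∈ L, s ≤ x) →
    (∀ c ∈ C.head?, b < c) →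
    List.foldl tableauInsert ([s, b] :: colOf C) L
      = [s, lastD L b] :: colOf (aux L b C)
  | [], s, b, C, _, _, _, _ => by simp
  | x :: L, s, b, C, hC, hL, hs, hb => by
    have hxb : x < b := (List.isChain_cons.1 hL).1 x rfl
    have hsx : ¬ x < s := not_lt.2 (hs x (by simp))
    have step : tableauInsert ([s, b] :: colOf C) x
        = [s, x] :: colOf (b :: C) := by
      rw [tableauInsert, rowInsert, if_neg hsx]
      simp only [rowInsert, if_pos hxb]
      simp [colShift C hC b hb]
    rw [List.foldl_cons, step]
    rw [phase1 L s x (b :: C) (List.isChain_cons.2 ⟨hb, hC⟩) hL.tail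
      (fun y hy => hs y (by simp [hy])) (by simpa using hxb)]
    simp

/-- Phase where new entries bump the second entry of the first row `[s, c, g]`. -/
lemma phase4 : ∀ (L : List ℝ) (s c g : ℝ) (C : List ℝ),
    C.Chain' (· < ·) → (c :: L).Chain' (· > ·) → (∀ x ∈ L, s ≤ x) →
    (∀ k ∈ C.head?, c < k) →
    List.foldl tableauInsert ([s, c, g] :: colOf C) L
      = [s, lastD L c, g] :: colOf (aux L c C)
  | [], s, c, g, C, _, _, _, _ => by simp
  | x :: L, s, c, g, C, hC, hL, hs, hb => by
    have hxc : x < c := (List.isChain_cons.1 hL).1 x rfl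
    have hsx : ¬ x < s := not_lt.2 (hs x (by simp))
    have step : tableauInsert ([s, c, g] :: colOf C) x
        = [s, x, g] :: colOf (c :: C) := by
      rw [tableauInsert, rowInsert, if_neg hsx]
      simp only [rowInsert, if_pos hxc]
      simp [colShift C hC c hb]
    rw [List.foldl_cons, step]
    rw [phase4 L s x g (c :: C) (List.isChain_cons.2 ⟨hb, hC⟩) hL.tail
      (fun y hy => hs y (by simp [hy])) (by simpa using hxc)]
    simp

/-- Phase with two rows of length two. -/
lemma phase3 : ∀ (L : List ℝ) (p e q g : ℝ) (C : List ℝ),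
    C.Chain' (· < ·) → (p :: L).Chain' (· > ·) → p < q → (∀ c ∈ C.head?, q < c) →
    List.foldl tableauInsert ([p, e] :: [q, g] :: colOf C) L
      = [lastD L p, e] :: [lastD (p :: L).dropLast q, g]
          :: colOf (aux (p :: L).dropLast q C)
  | [], p, e, q, g, C, _, _, _, _ => by simp
  | x :: L, p, e, q, g, C, hC, hL, hpq, hq => by
    have hxp : x < p := (List.isChain_cons.1 hL).1 x rfl
    have step : tableauInsert ([p, e] :: [q, g] :: colOf C) x
        = [x, e] :: [p, g] :: colOf (q :: C) := by
      rw [tableauInsert, rowInsert, if_pos hxp]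
      simp only [tableauInsert, rowInsert, if_pos hpq]
      simp [colShift C hC q hq]
    rw [List.foldl_cons, step]
    rw [phase3 L x e p g (q :: C) (List.isChain_cons.2 ⟨hq, hC⟩) hL.tail hxp
      (by simpa using hpq)]
    have hd : (p :: x :: L).dropLast = p :: (x :: L).dropLast := rfl
    rw [hd]
    simp


/-! ### Facts about the mirrored list -/

/-- The reversed negated list. -/
def negRev (u : List ℝ) : List ℝ := u.reverse.map (fun x => -x)

@[simp] lemma negRev_length (u : List ℝ) : (negRev u).length = u.length := by
  simp [negRev]

lemma negRev_mem {u : List ℝ} {x : ℝ} (hx : x ∈ negRev u) : ∃ y ∈ u, x = -y := by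
  simp only [negRev, List.mem_map, List.mem_reverse] at hx
  obtain ⟨y, hy, rfl⟩ := hx
  exact ⟨y, hy, rfl⟩

lemma negRev_chain {u : List ℝ} (hu : u.Chain' (· > ·)) : (negRev u).Chain' (· > ·) := by
  unfold List.Chain' at hu ⊢
  rw [negRev, List.isChain_map, List.isChain_reverse]
  exact List.IsChain.imp (fun a b h => by linarith) hu

lemma lastD_append : ∀ (X Y : List ℝ) (d : ℝ), lastD (X ++ Y) d = lastD Y (lastD X d)
  | [], Y, d => rfl
  | x :: X, Y, d => by
    rw [List.cons_append, lastD_cons, lastD_append X Y x, lastD_cons]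

lemma negRev_lastD (u₀ : ℝ) (u' : List ℝ) (d : ℝ) : lastD (negRev (u₀ :: u')) d = -u₀ := by
  have : negRev (u₀ :: u') = (u'.reverse.map (fun x => -x)) ++ [-u₀] := by
    simp [negRev]
  rw [this, lastD_append]
  rfl

lemma dropWhile_not_head (s : ℝ) : ∀ (l : List ℝ),
    ∀ c ∈ (l.dropWhile (fun x => s ≤ x)).head?, c < s
  | [], c, hc => by simp at hc
  | x :: l, c, hc => by
    by_cases h : s ≤ x
    · rw [List.dropWhile_cons_of_pos (by simpa using h)] at hc
      exact dropWhile_not_head s l c hc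
    · rw [List.dropWhile_cons_of_neg (by simpa using h)] at hc
      simp at hc; subst hc; linarith [not_le.1 h]

lemma chain_gt_trans : IsTrans ℝ (· > ·) := ⟨fun _ _ _ h1 h2 => lt_trans h2 h1⟩

lemma dropWhile_chain {s : ℝ} {l : List ℝ} (hl : l.Chain' (· > ·)) :
    (l.dropWhile (fun x => s ≤ x)).Chain' (· > ·) := by
  have := chain_gt_trans
  exact hl.sublist (l.dropWhile_suffix _).sublist

lemma dropWhile_all_lt {s : ℝ} {l : List ℝ} (hl : l.Chain' (· > ·)) :
    ∀ x ∈ l.dropWhile (fun x => s ≤ x), x < s := by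
  intro x hx
  rcases hd : l.dropWhile (fun x => s ≤ x) with _ | ⟨y, l'⟩
  · rw [hd] at hx; simp at hx
  · rw [hd] at hx
    have hy : y < s := dropWhile_not_head s l y (by rw [hd]; rfl)
    rcases List.mem_cons.1 hx with rfl | hx
    · exact hy
    · have hc : (y :: l').Chain' (· > ·) := by rw [← hd]; exact dropWhile_chain hl
      exact lt_trans (chain_head_gt l' y hc x hx) hy

lemma takeWhile_chain {s : ℝ} {l : List ℝ} (hl : l.Chain' (· > ·)) :
    (l.takeWhile (fun x => s ≤ x)).Chain' (· > ·) := by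
  have := chain_gt_trans
  exact hl.sublist (l.takeWhile_prefix _).sublist


/-! ### Scenario lemmas -/

lemma scenario1a (u' : List ℝ) (u₀ a s : ℝ)
    (hu : (u₀ :: u').Chain' (· > ·))
    (hua : ∀ x ∈ u₀ :: u', |a| < x)
    (ha : 0 < a) (hs1 : -a < s) (hs2 : s ≤ u₀) :
    RSshape ([s] ++ (u₀ :: u') ++ [a] ++ [-a] ++ negRev (u₀ :: u') ++ [-s])
      = 2 :: 2 :: List.replicate (2 * u'.length + 2) 1 := by
  set B := negRev (u₀ :: u') with hB
  set P' : List ℝ := u' ++ [a] with hP'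
  set P₁' : List ℝ := P'.takeWhile (fun x => s ≤ x) with hP₁'
  set P₂ : List ℝ := P'.dropWhile (fun x => s ≤ x) with hP₂
  set M₂ : List ℝ := P₂ ++ (-a :: B) with hM₂
  -- basic facts
  have haa : |a| = a := abs_of_pos ha
  have huP : ∀ x ∈ u₀ :: P', a ≤ x := by
    intro x hx
    rcases List.mem_cons.1 hx with rfl | hx
    · linarith [hua x (by simp)]
    · rw [hP'] at hx
      rcases List.mem_append.1 hx with hx | hx
      · have h1 : x ∈ u₀ :: u' := by simp [hx]
        linarith [hua x h1, le_abs_self a]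
      · simp at hx; subst hx; exact le_refl _
  have hchainP : (u₀ :: P').Chain' (· > ·) := by
    rw [hP', ← List.cons_append]
    apply List.IsChain.append hu (List.isChain_singleton a)
    intro x hx y hy
    simp at hy; subst hy
    have hx' : x ∈ u₀ :: u' := by
      rcases List.mem_getLast?_eq_getLast hx with ⟨h1, h2⟩
      rw [h2]; exact List.getLast_mem h1
    calc a ≤ |a| := le_abs_self a
      _ < x := hua x hx'
  have hsplit : P₁' ++ P₂ = P' := List.takeWhile_append_dropWhile ..
  have hchainP1 : (u₀ :: P₁').Chain' (· > ·) := by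
    have : u₀ :: P₁' = (u₀ :: P').takeWhile (fun x => s ≤ x) := by
      rw [List.takeWhile_cons_of_pos (by simpa using hs2)]
    rw [this]; exact takeWhile_chain hchainP
  have hP₁mem : ∀ x ∈ P₁', s ≤ x := fun x hx => by
    simpa using List.mem_takeWhile_imp hx
  have hP₂lt : ∀ x ∈ P₂, x < s := dropWhile_all_lt hchainP.tail
  have hBmem : ∀ x ∈ B, x < -a := by
    intro x hx
    obtain ⟨y, hy, rfl⟩ := negRev_mem hx
    have := hua y hy; rw [haa] at this; linarith
  have hBchain : B.Chain' (· > ·) := negRev_chain hu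
  -- the word, regrouped
  have hword : [s] ++ (u₀ :: u') ++ [a] ++ [-a] ++ B ++ [-s]
      = s :: u₀ :: (P₁' ++ (M₂ ++ [-s])) := by
    have h : P₁' ++ P₂ = u' ++ [a] := by rw [hsplit]
    calc [s] ++ (u₀ :: u') ++ [a] ++ [-a] ++ B ++ [-s]
        = s :: u₀ :: ((u' ++ [a]) ++ ((-a :: B) ++ [-s])) := by simp
      _ = s :: u₀ :: ((P₁' ++ P₂) ++ ((-a :: B) ++ [-s])) := by rw [h]
      _ = s :: u₀ :: (P₁' ++ (M₂ ++ [-s])) := by rw [hM₂]; simp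
  rw [hword, RSshape, RS]
  -- first two insertions
  have step1 : tableauInsert ([] : List (List ℝ)) s = [[s]] := rfl
  have step2 : tableauInsert [[s]] u₀ = [[s, u₀]] := by
    rw [tableauInsert, rowInsert, if_neg (not_lt.2 hs2)]
    rfl
  rw [List.foldl_cons, List.foldl_cons, step1, step2, List.foldl_append]
  -- phase 1 over P₁'
  have hcol0 : ([] : List ℝ).Chain' (· < ·) := List.isChain_nil
  have hph1 : List.foldl tableauInsert [[s, u₀]] P₁'
      = [s, lastD P₁' u₀] :: colOf (aux P₁' u₀ []) := by
    have := phase1 P₁' s u₀ [] hcol0 hchainP1 hP₁mem (by simp)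
    simpa [colOf] using this
  rw [hph1]
  set e : ℝ := lastD P₁' u₀ with he
  set K₀ : List ℝ := aux P₁' u₀ [] with hK₀
  -- facts about e
  have heMem : e ∈ u₀ :: P₁' := by
    rcases lastD_mem P₁' u₀ with h | h
    · rw [he, h]; simp
    · rw [he]; simp [h]
  have hse : s ≤ e := by
    rcases List.mem_cons.1 heMem with h | h
    · rw [h]; exact hs2
    · exact hP₁mem e h
  have hae : a ≤ e := by
    apply huP
    rcases List.mem_cons.1 heMem with h | h
    · simp [h]
    · have : e ∈ P' := by
        rw [← hsplit]; exact List.mem_append_left _ h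
      simp [this]
  -- phase 2 over M₂
  have hK₀chain : K₀.Chain' (· < ·) := aux_chain P₁' u₀ [] hchainP1 List.isChain_nil (by simp)
  have hK₀head : ∀ c ∈ K₀.head?, s < c := by
    intro c hc
    have := aux_head_gt P₁' u₀ [] hchainP1 (by simp) c hc
    calc s ≤ e := hse
      _ < c := this
  have hM₂chain : M₂.Chain' (· > ·) := by
    apply List.IsChain.append (dropWhile_chain hchainP.tail)
    · apply List.isChain_cons.2
      refine ⟨fun y hy => ?_, hBchain⟩
      have := hBmem y (List.mem_of_mem_head? hy)
      linarith
    · intro x hx y hy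
      simp at hy; subst hy
      have hx' : x ∈ P₂ := by
        rcases List.mem_getLast?_eq_getLast hx with ⟨h1, h2⟩
        rw [h2]; exact List.getLast_mem h1
      have : x ∈ P' := by rw [← hsplit]; exact List.mem_append_right _ hx'
      have := huP x (by simp [this])
      linarith
  have hsM₂chain : (s :: M₂).Chain' (· > ·) := by
    apply List.isChain_cons.2
    refine ⟨fun y hy => ?_, hM₂chain⟩
    rw [hM₂] at hy
    rcases hP₂e : P₂ with _ | ⟨p, P₂'⟩
    · rw [hP₂e] at hy; simp at hy; subst hy; linarith
    · rw [hP₂e] at hy; simp at hy; subst hy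
      exact hP₂lt p (by rw [hP₂e]; simp)
  have hph2 : List.foldl tableauInsert ([s, e] :: colOf K₀) M₂
      = [lastD M₂ s, e] :: colOf (aux M₂ s K₀) := by
    have := phase2 M₂ s [e] K₀ hK₀chain hsM₂chain hK₀head
    simpa using this
  rw [List.foldl_append, hph2]
  set g : ℝ := lastD M₂ s with hg
  set K : List ℝ := aux M₂ s K₀ with hK
  have hgval : g = -u₀ := by
    rw [hg, hM₂, lastD_append, lastD_cons, hB, negRev_lastD]
  -- final insertion of -s
  obtain ⟨k₀, K', hKeq⟩ : ∃ k₀ K', K = k₀ :: K' := by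
    rcases hKe : K with _ | ⟨k₀, K'⟩
    · exfalso
      have : K.length = M₂.length + K₀.length := aux_length ..
      rw [hKe] at this
      simp [hM₂] at this
      omega
    · exact ⟨k₀, K', rfl⟩
  have hk₀ : k₀ ∈ s :: M₂ := by
    apply aux_head_mem M₂ s K₀ (by simp [hM₂]) k₀
    rw [← hK, hKeq]; rfl
  have hk₀e : ¬ e < k₀ := by
    rw [not_lt]
    rcases List.mem_cons.1 hk₀ with h | h
    · rw [h]; exact hse
    · rw [hM₂] at h
      rcases List.mem_append.1 h with h | h
      · linarith [hP₂lt k₀ h]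
      · rcases List.mem_cons.1 h with h | h
        · rw [h]; linarith
        · linarith [hBmem k₀ h]
  have hfin : tableauInsert ([g, e] :: colOf K) (-s)
      = [g, -s] :: [k₀, e] :: colOf K' := by
    have h1 : ¬ (-s < g) := by rw [hgval]; linarith
    have h2 : -s < e := by linarith
    rw [tableauInsert, rowInsert, if_neg h1]
    simp only [rowInsert, if_pos h2]
    rw [hKeq, colPlace k₀ K' e hk₀e]
  rw [List.foldl_cons, List.foldl_nil, hfin]
  -- compute the shape
  have hlen : K'.length = 2 * u'.length + 2 := by
    have h1 : K.length = M₂.length + K₀.length := aux_length ..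
    have h2 : K₀.length = P₁'.length := by rw [hK₀, aux_length]; simp
    have h3 : P₁'.length + P₂.length = u'.length + 1 := by
      have := congrArg List.length hsplit
      simp [hP'] at this
      omega
    have h4 : M₂.length = P₂.length + u'.length + 2 := by
      simp only [hM₂, List.length_append, List.length_cons, hB, negRev_length]
      omega
    have h5 : K.length = K'.length + 1 := by rw [hKeq]; simp
    omega
  simp [colOf_shape, hlen]

lemma scenario2a (u' : List ℝ) (u₀ a s : ℝ)
    (hu : (u₀ :: u').Chain' (· > ·))
    (hua : ∀ x ∈ u₀ :: u', |a| < x)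
    (ha : 0 < a) (hs1 : s ≤ -a) :
    RSshape ([s] ++ (u₀ :: u') ++ [a] ++ [-a] ++ negRev (u₀ :: u') ++ [-s])
      = 3 :: List.replicate (2 * u'.length + 3) 1 := by
  set B := negRev (u₀ :: u') with hB
  set P' : List ℝ := u' ++ [a] with hP'
  set B₁ : List ℝ := B.takeWhile (fun x => s ≤ x) with hB₁
  set B₂ : List ℝ := B.dropWhile (fun x => s ≤ x) with hB₂
  set M₁' : List ℝ := P' ++ (-a :: B₁) with hM₁'
  have haa : |a| = a := abs_of_pos ha
  have huP : ∀ x ∈ u₀ :: P', a ≤ x := by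
    intro x hx
    rcases List.mem_cons.1 hx with rfl | hx
    · linarith [hua x (by simp)]
    · rw [hP'] at hx
      rcases List.mem_append.1 hx with hx | hx
      · have h1 : x ∈ u₀ :: u' := by simp [hx]
        linarith [hua x h1, le_abs_self a]
      · simp at hx; subst hx; exact le_refl _
  have hchainP : (u₀ :: P').Chain' (· > ·) := by
    rw [hP', ← List.cons_append]
    apply List.IsChain.append hu (List.isChain_singleton a)
    intro x hx y hy
    simp at hy; subst hy
    have hx' : x ∈ u₀ :: u' := by
      rcases List.mem_getLast?_eq_getLast hx with ⟨h1, h2⟩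
      rw [h2]; exact List.getLast_mem h1
    calc a ≤ |a| := le_abs_self a
      _ < x := hua x hx'
  have hBmem : ∀ x ∈ B, x < -a := by
    intro x hx
    obtain ⟨y, hy, rfl⟩ := negRev_mem hx
    have := hua y hy; rw [haa] at this; linarith
  have hBchain : B.Chain' (· > ·) := negRev_chain hu
  have hsplitB : B₁ ++ B₂ = B := List.takeWhile_append_dropWhile ..
  have hB₁mem : ∀ x ∈ B₁, s ≤ x := fun x hx => by
    simpa using List.mem_takeWhile_imp hx
  have hB₂lt : ∀ x ∈ B₂, x < s := dropWhile_all_lt hBchain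
  have hchainM : (u₀ :: M₁').Chain' (· > ·) := by
    rw [hM₁', ← List.cons_append]
    apply List.IsChain.append hchainP
    · apply List.isChain_cons.2
      refine ⟨fun y hy => ?_, takeWhile_chain hBchain⟩
      have : y ∈ B := (B.takeWhile_prefix _).sublist.subset (List.mem_of_mem_head? hy)
      linarith [hBmem y this]
    · intro x hx y hy
      simp at hy; subst hy
      have hx' : x ∈ u₀ :: P' := by
        rcases List.mem_getLast?_eq_getLast hx with ⟨h1, h2⟩
        rw [h2]; exact List.getLast_mem h1
      linarith [huP x hx']
  have hMmem : ∀ x ∈ M₁', s ≤ x := by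
    intro x hx
    rw [hM₁'] at hx
    rcases List.mem_append.1 hx with hx | hx
    · linarith [huP x (by simp [hx])]
    · rcases List.mem_cons.1 hx with rfl | hx
      · exact hs1
      · exact hB₁mem x hx
  -- the word, regrouped
  have hword : [s] ++ (u₀ :: u') ++ [a] ++ [-a] ++ B ++ [-s]
      = s :: u₀ :: (M₁' ++ (B₂ ++ [-s])) := by
    have h : B₁ ++ B₂ = B := hsplitB
    calc [s] ++ (u₀ :: u') ++ [a] ++ [-a] ++ B ++ [-s]
        = s :: u₀ :: ((u' ++ [a]) ++ (-a :: ((B₁ ++ B₂) ++ [-s]))) := by rw [h]; simp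
      _ = s :: u₀ :: (M₁' ++ (B₂ ++ [-s])) := by rw [hM₁', hP']; simp
  rw [hword, RSshape, RS]
  have step1 : tableauInsert ([] : List (List ℝ)) s = [[s]] := rfl
  have hsu₀ : s ≤ u₀ := by linarith [hua u₀ (by simp), le_abs_self a]
  have step2 : tableauInsert [[s]] u₀ = [[s, u₀]] := by
    rw [tableauInsert, rowInsert, if_neg (not_lt.2 hsu₀)]
    rfl
  rw [List.foldl_cons, List.foldl_cons, step1, step2, List.foldl_append]
  have hph1 : List.foldl tableauInsert [[s, u₀]] M₁'
      = [s, lastD M₁' u₀] :: colOf (aux M₁' u₀ []) := by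
    have := phase1 M₁' s u₀ [] List.isChain_nil hchainM hMmem (by simp)
    simpa [colOf] using this
  rw [hph1]
  set e : ℝ := lastD M₁' u₀ with he
  set K₀ : List ℝ := aux M₁' u₀ [] with hK₀
  have heMem : e ∈ u₀ :: M₁' := by
    rcases lastD_mem M₁' u₀ with h | h
    · rw [he, h]; simp
    · rw [he]; simp [h]
  have hse : s ≤ e := by
    rcases List.mem_cons.1 heMem with h | h
    · rw [h]; exact hsu₀
    · exact hMmem e h
  have hea : e ≤ -a := by
    have hmem : -a ∈ u₀ :: M₁' := by simp [hM₁']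
    have := lastD_le_chain M₁' u₀ hchainM (-a) hmem
    rw [← he] at this; exact this
  have hK₀chain : K₀.Chain' (· < ·) := aux_chain M₁' u₀ [] hchainM List.isChain_nil (by simp)
  have hK₀head : ∀ c ∈ K₀.head?, s < c := by
    intro c hc
    have := aux_head_gt M₁' u₀ [] hchainM (by simp) c hc
    calc s ≤ e := hse
      _ < c := this
  have hsB₂chain : (s :: B₂).Chain' (· > ·) := by
    apply List.isChain_cons.2
    exact ⟨fun y hy => dropWhile_not_head s B y hy, dropWhile_chain hBchain⟩
  have hph2 : List.foldl tableauInsert ([s, e] :: colOf K₀) B₂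
      = [lastD B₂ s, e] :: colOf (aux B₂ s K₀) := by
    have := phase2 B₂ s [e] K₀ hK₀chain hsB₂chain hK₀head
    simpa using this
  rw [List.foldl_append, hph2]
  set g : ℝ := lastD B₂ s with hg
  set K : List ℝ := aux B₂ s K₀ with hK
  have hgs : g ≤ s := by
    rcases lastD_mem B₂ s with h | h
    · rw [hg, h]
    · linarith [hB₂lt g (hg ▸ h)]
  have hfin : tableauInsert ([g, e] :: colOf K) (-s)
      = [g, e, -s] :: colOf K := by
    have h1 : ¬ (-s < g) := by push_neg; linarith
    have h2 : ¬ (-s < e) := by push_neg; linarith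
    rw [tableauInsert, rowInsert, if_neg h1]
    simp only [rowInsert, if_neg h2]
  rw [List.foldl_cons, List.foldl_nil, hfin]
  have hlen : K.length = 2 * u'.length + 3 := by
    have h1 : K.length = B₂.length + K₀.length := aux_length ..
    have h2 : K₀.length = M₁'.length := by rw [hK₀, aux_length]; simp
    have h3 : B₁.length + B₂.length = u'.length + 1 := by
      have := congrArg List.length hsplitB
      simp [hB] at this
      omega
    have h4 : M₁'.length = u'.length + 2 + B₁.length := by
      simp only [hM₁', hP', List.length_append, List.length_cons, List.length_nil]
      omega
    omega
  simp [colOf_shape, hlen]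

lemma lastD_irrel : ∀ (L : List ℝ), L ≠ [] → ∀ (d₁ d₂ : ℝ), lastD L d₁ = lastD L d₂
  | [], h, _, _ => absurd rfl h
  | x :: L, _, d₁, d₂ => rfl

lemma scenario2bc (u' : List ℝ) (u₀ a s : ℝ)
    (hu : (u₀ :: u').Chain' (· > ·))
    (hua : ∀ x ∈ u₀ :: u', |a| < x)
    (ha : a ≤ 0) (hs1 : s ≤ a) :
    RSshape ([s] ++ (u₀ :: u') ++ [a] ++ [-a] ++ negRev (u₀ :: u') ++ [-s])
      = 4 :: List.replicate (2 * u'.length + 2) 1 := by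
  set B := negRev (u₀ :: u') with hB
  set P' : List ℝ := u' ++ [a] with hP'
  set B₁ : List ℝ := B.takeWhile (fun x => s ≤ x) with hB₁
  set B₂ : List ℝ := B.dropWhile (fun x => s ≤ x) with hB₂
  have haa : |a| = -a := abs_of_nonpos ha
  have hBmem : ∀ x ∈ B, x < a := by
    intro x hx
    obtain ⟨y, hy, rfl⟩ := negRev_mem hx
    have := hua y hy; rw [haa] at this; linarith
  have hBchain : B.Chain' (· > ·) := negRev_chain hu
  have hsplitB : B₁ ++ B₂ = B := List.takeWhile_append_dropWhile ..
  have hB₁mem : ∀ x ∈ B₁, s ≤ x := fun x hx => by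
    simpa using List.mem_takeWhile_imp hx
  have hB₂lt : ∀ x ∈ B₂, x < s := dropWhile_all_lt hBchain
  have hchainP : (u₀ :: P').Chain' (· > ·) := by
    rw [hP', ← List.cons_append]
    apply List.IsChain.append hu (List.isChain_singleton a)
    intro x hx y hy
    simp at hy; subst hy
    have hx' : x ∈ u₀ :: u' := by
      rcases List.mem_getLast?_eq_getLast hx with ⟨h1, h2⟩
      rw [h2]; exact List.getLast_mem h1
    have := hua x hx'
    linarith [abs_nonneg a]
  have hPmem : ∀ x ∈ P', s ≤ x := by
    intro x hx
    rw [hP'] at hx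
    rcases List.mem_append.1 hx with hx | hx
    · have := hua x (by simp [hx]); linarith [abs_nonneg a]
    · simp at hx; subst hx; exact hs1
  -- the word, regrouped
  have hword : [s] ++ (u₀ :: u') ++ [a] ++ [-a] ++ B ++ [-s]
      = s :: u₀ :: (P' ++ ((-a) :: (B₁ ++ (B₂ ++ [-s])))) := by
    calc [s] ++ (u₀ :: u') ++ [a] ++ [-a] ++ B ++ [-s]
        = s :: u₀ :: ((u' ++ [a]) ++ ((-a) :: ((B₁ ++ B₂) ++ [-s]))) := by rw [hsplitB]; simp
      _ = s :: u₀ :: (P' ++ ((-a) :: (B₁ ++ (B₂ ++ [-s])))) := by rw [hP']; simp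
  rw [hword, RSshape, RS]
  have step1 : tableauInsert ([] : List (List ℝ)) s = [[s]] := rfl
  have hsu₀ : s ≤ u₀ := by linarith [hua u₀ (by simp), abs_nonneg a]
  have step2 : tableauInsert [[s]] u₀ = [[s, u₀]] := by
    rw [tableauInsert, rowInsert, if_neg (not_lt.2 hsu₀)]
    rfl
  rw [List.foldl_cons, List.foldl_cons, step1, step2, List.foldl_append]
  -- phase 1 over P'
  have hph1 : List.foldl tableauInsert [[s, u₀]] P'
      = [s, lastD P' u₀] :: colOf (aux P' u₀ []) := by
    have := phase1 P' s u₀ [] List.isChain_nil hchainP hPmem (by simp)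
    simpa [colOf] using this
  rw [hph1]
  set K₀ : List ℝ := aux P' u₀ [] with hK₀
  have hP'last : lastD P' u₀ = a := by
    rw [hP', lastD_append]; rfl
  rw [hP'last]
  -- insert -a
  have hstep3 : tableauInsert ([s, a] :: colOf K₀) (-a)
      = [s, a, -a] :: colOf K₀ := by
    have h1 : ¬ (-a < s) := by push_neg; linarith
    have h2 : ¬ (-a < a) := by push_neg; linarith
    rw [tableauInsert, rowInsert, if_neg h1]
    simp only [rowInsert, if_neg h2]
  rw [List.foldl_cons, hstep3]
  -- phase 4 over B₁
  have hK₀chain : K₀.Chain' (· < ·) := aux_chain P' u₀ [] hchainP List.isChain_nil (by simp)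
  have hK₀head : ∀ c ∈ K₀.head?, a < c := by
    intro c hc
    have := aux_head_gt P' u₀ [] hchainP (by simp) c hc
    rw [hP'last] at this; exact this
  have haB₁chain : (a :: B₁).Chain' (· > ·) := by
    apply List.isChain_cons.2
    refine ⟨fun y hy => ?_, takeWhile_chain hBchain⟩
    have : y ∈ B := (B.takeWhile_prefix _).sublist.subset (List.mem_of_mem_head? hy)
    exact hBmem y this
  have hph4 : List.foldl tableauInsert ([s, a, -a] :: colOf K₀) B₁
      = [s, lastD B₁ a, -a] :: colOf (aux B₁ a K₀) := by
    exact phase4 B₁ s a (-a) K₀ hK₀chain haB₁chain hB₁mem hK₀head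
  rw [List.foldl_append, hph4]
  set c : ℝ := lastD B₁ a with hc
  set K₁ : List ℝ := aux B₁ a K₀ with hK₁
  have hca : c ≤ a := by
    rcases lastD_mem B₁ a with h | h
    · rw [hc, h]
    · have : c ∈ B := (B.takeWhile_prefix _).sublist.subset (hc ▸ h)
      linarith [hBmem c this]
  have hsc : s ≤ c := by
    rcases lastD_mem B₁ a with h | h
    · rw [hc, h]; exact hs1
    · exact hB₁mem c (hc ▸ h)
  -- phase 2 over B₂
  have hK₁chain : K₁.Chain' (· < ·) := aux_chain B₁ a K₀ haB₁chain hK₀chain hK₀head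
  have hK₁head : ∀ k ∈ K₁.head?, s < k := by
    intro k hk
    have := aux_head_gt B₁ a K₀ haB₁chain hK₀head k hk
    rw [← hc] at this
    linarith
  have hsB₂chain : (s :: B₂).Chain' (· > ·) := by
    apply List.isChain_cons.2
    exact ⟨fun y hy => dropWhile_not_head s B y hy, dropWhile_chain hBchain⟩
  have hph2 : List.foldl tableauInsert ([s, c, -a] :: colOf K₁) B₂
      = [lastD B₂ s, c, -a] :: colOf (aux B₂ s K₁) := by
    have := phase2 B₂ s [c, -a] K₁ hK₁chain hsB₂chain hK₁head
    simpa using this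
  rw [List.foldl_append, hph2]
  set g : ℝ := lastD B₂ s with hg
  set K₂ : List ℝ := aux B₂ s K₁ with hK₂
  have hgs : g ≤ s := by
    rcases lastD_mem B₂ s with h | h
    · rw [hg, h]
    · linarith [hB₂lt g (hg ▸ h)]
  -- final insertion of -s
  have hfin : tableauInsert ([g, c, -a] :: colOf K₂) (-s)
      = [g, c, -a, -s] :: colOf K₂ := by
    have h1 : ¬ (-s < g) := by push_neg; linarith
    have h2 : ¬ (-s < c) := by push_neg; linarith
    have h3 : ¬ (-s < -a) := by push_neg; linarith
    rw [tableauInsert, rowInsert, if_neg h1]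
    simp only [rowInsert, if_neg h2, if_neg h3]
  rw [List.foldl_cons, List.foldl_nil, hfin]
  have hlen : K₂.length = 2 * u'.length + 2 := by
    have h1 : K₂.length = B₂.length + K₁.length := aux_length ..
    have h2 : K₁.length = B₁.length + K₀.length := aux_length ..
    have h3 : K₀.length = P'.length := by rw [hK₀, aux_length]; simp
    have h4 : B₁.length + B₂.length = u'.length + 1 := by
      have := congrArg List.length hsplitB
      simp [hB] at this
      omega
    have h5 : P'.length = u'.length + 1 := by simp [hP']
    omega
  simp [colOf_shape, hlen]

lemma scenario1bc (u' : List ℝ) (u₀ a s : ℝ)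
    (hu : (u₀ :: u').Chain' (· > ·))
    (hua : ∀ x ∈ u₀ :: u', |a| < x)
    (ha : a ≤ 0) (hs1 : a < s) (hs2 : s ≤ u₀) :
    RSshape ([s] ++ (u₀ :: u') ++ [a] ++ [-a] ++ negRev (u₀ :: u') ++ [-s])
      = 2 :: 2 :: 2 :: List.replicate (2 * u'.length) 1 := by
  set B := negRev (u₀ :: u') with hB
  set P' : List ℝ := u' ++ [a] with hP'
  set P₁' : List ℝ := P'.takeWhile (fun x => s ≤ x) with hP₁'
  set P₂ : List ℝ := P'.dropWhile (fun x => s ≤ x) with hP₂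
  have haa : |a| = -a := abs_of_nonpos ha
  have hBmem : ∀ x ∈ B, x < a := by
    intro x hx
    obtain ⟨y, hy, rfl⟩ := negRev_mem hx
    have := hua y hy; rw [haa] at this; linarith
  have hBchain : B.Chain' (· > ·) := negRev_chain hu
  have hchainP : (u₀ :: P').Chain' (· > ·) := by
    rw [hP', ← List.cons_append]
    apply List.IsChain.append hu (List.isChain_singleton a)
    intro x hx y hy
    simp at hy; subst hy
    have hx' : x ∈ u₀ :: u' := by
      rcases List.mem_getLast?_eq_getLast hx with ⟨h1, h2⟩
      rw [h2]; exact List.getLast_mem h1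
    have := hua x hx'
    linarith [abs_nonneg a]
  have hsplit : P₁' ++ P₂ = P' := List.takeWhile_append_dropWhile ..
  have hchainP1 : (u₀ :: P₁').Chain' (· > ·) := by
    have : u₀ :: P₁' = (u₀ :: P').takeWhile (fun x => s ≤ x) := by
      rw [List.takeWhile_cons_of_pos (by simpa using hs2)]
    rw [this]; exact takeWhile_chain hchainP
  have hP₁mem : ∀ x ∈ P₁', s ≤ x := fun x hx => by
    simpa using List.mem_takeWhile_imp hx
  have hP₂lt : ∀ x ∈ P₂, x < s := dropWhile_all_lt hchainP.tail
  have hP₂ne : P₂ ≠ [] := by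
    intro h
    have : ∀ x ∈ P', s ≤ x := by
      intro x hx
      have := List.dropWhile_eq_nil_iff.1 (hP₂ ▸ h) x hx
      simpa using this
    have := this a (by simp [hP'])
    linarith
  have hP'last : lastD P' u₀ = a := by rw [hP', lastD_append]; rfl
  -- the word, regrouped
  have hword : [s] ++ (u₀ :: u') ++ [a] ++ [-a] ++ B ++ [-s]
      = s :: u₀ :: (P₁' ++ (P₂ ++ ((-a) :: (B ++ [-s])))) := by
    calc [s] ++ (u₀ :: u') ++ [a] ++ [-a] ++ B ++ [-s]
        = s :: u₀ :: ((P₁' ++ P₂) ++ ((-a) :: (B ++ [-s]))) := by rw [hsplit, hP']; simp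
      _ = s :: u₀ :: (P₁' ++ (P₂ ++ ((-a) :: (B ++ [-s])))) := by simp
  rw [hword, RSshape, RS]
  have step1 : tableauInsert ([] : List (List ℝ)) s = [[s]] := rfl
  have step2 : tableauInsert [[s]] u₀ = [[s, u₀]] := by
    rw [tableauInsert, rowInsert, if_neg (not_lt.2 hs2)]
    rfl
  rw [List.foldl_cons, List.foldl_cons, step1, step2, List.foldl_append]
  -- phase 1 over P₁'
  have hph1 : List.foldl tableauInsert [[s, u₀]] P₁'
      = [s, lastD P₁' u₀] :: colOf (aux P₁' u₀ []) := by
    have := phase1 P₁' s u₀ [] List.isChain_nil hchainP1 hP₁mem (by simp)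
    simpa [colOf] using this
  rw [hph1]
  set e : ℝ := lastD P₁' u₀ with he
  set K₀ : List ℝ := aux P₁' u₀ [] with hK₀
  have heMem : e ∈ u₀ :: P₁' := by
    rcases lastD_mem P₁' u₀ with h | h
    · rw [he, h]; simp
    · rw [he]; simp [h]
  have hse : s ≤ e := by
    rcases List.mem_cons.1 heMem with h | h
    · rw [h]; exact hs2
    · exact hP₁mem e h
  have hea : -a < e := by
    have hmem : e ∈ u₀ :: P' := by
      rcases List.mem_cons.1 heMem with h | h
      · simp [h]
      · have : e ∈ P' := by rw [← hsplit]; exact List.mem_append_left _ h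
        simp [this]
    rcases List.mem_cons.1 hmem with h | h
    · rw [haa] at hua; exact h ▸ hua u₀ (by simp)
    · rw [hP'] at h
      rcases List.mem_append.1 h with h | h
      · rw [haa] at hua; exact hua e (by simp [h])
      · simp at h; linarith [hs1, hse]
  -- phase 2 over P₂
  have hK₀chain : K₀.Chain' (· < ·) := aux_chain P₁' u₀ [] hchainP1 List.isChain_nil (by simp)
  have hK₀head : ∀ c ∈ K₀.head?, s < c := by
    intro c hc
    have := aux_head_gt P₁' u₀ [] hchainP1 (by simp) c hc
    rw [← he] at this; linarith
  have hsP₂chain : (s :: P₂).Chain' (· > ·) := by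
    apply List.isChain_cons.2
    exact ⟨fun y hy => dropWhile_not_head s P' y hy, dropWhile_chain hchainP.tail⟩
  have hph2 : List.foldl tableauInsert ([s, e] :: colOf K₀) P₂
      = [lastD P₂ s, e] :: colOf (aux P₂ s K₀) := by
    have := phase2 P₂ s [e] K₀ hK₀chain hsP₂chain hK₀head
    simpa using this
  rw [List.foldl_append, hph2]
  set K₁ : List ℝ := aux P₂ s K₀ with hK₁
  have hg₁ : lastD P₂ s = a := by
    have h1 : lastD P₂ e = a := by
      rw [← hP'last, ← hsplit, lastD_append, he]
    rw [lastD_irrel P₂ hP₂ne s e, h1]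
  rw [hg₁]
  -- insert -a
  have hK₁chain : K₁.Chain' (· < ·) := aux_chain P₂ s K₀ hsP₂chain hK₀chain hK₀head
  obtain ⟨h₂, K₁', hK₁eq⟩ : ∃ h₂ K₁', K₁ = h₂ :: K₁' := by
    rcases hKe : K₁ with _ | ⟨h₂, K₁'⟩
    · exfalso
      have : K₁.length = P₂.length + K₀.length := aux_length ..
      rw [hKe] at this
      rcases List.exists_cons_of_ne_nil hP₂ne with ⟨p, P₂', hp⟩
      rw [hp] at this; simp at this
      omega
    · exact ⟨h₂, K₁', rfl⟩
  have hh₂mem : h₂ ∈ s :: P₂ := by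
    apply aux_head_mem P₂ s K₀ hP₂ne h₂
    rw [← hK₁, hK₁eq]; rfl
  have hh₂s : h₂ ≤ s := by
    rcases List.mem_cons.1 hh₂mem with h | h
    · rw [h]
    · linarith [hP₂lt h₂ h]
  have hah₂ : a < h₂ := by
    have := aux_head_gt P₂ s K₀ hsP₂chain hK₀head h₂ (by rw [← hK₁, hK₁eq]; rfl)
    rw [hg₁] at this; exact this
  have hstep3 : tableauInsert ([a, e] :: colOf K₁) (-a)
      = [a, -a] :: [h₂, e] :: colOf K₁' := by
    have h1 : ¬ (-a < a) := by push_neg; linarith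
    have h2 : -a < e := hea
    rw [tableauInsert, rowInsert, if_neg h1]
    simp only [rowInsert, if_pos h2]
    rw [hK₁eq, colPlace h₂ K₁' e (not_lt.2 (le_trans hh₂s hse))]
  rw [List.foldl_cons, hstep3]
  -- phase 3 over B
  have hK₁'chain : K₁'.Chain' (· < ·) := by
    have := hK₁eq ▸ hK₁chain; exact this.tail
  have hK₁'head : ∀ k ∈ K₁'.head?, h₂ < k := by
    have := hK₁eq ▸ hK₁chain
    exact (List.isChain_cons.1 this).1
  have haBchain : (a :: B).Chain' (· > ·) := by
    apply List.isChain_cons.2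
    refine ⟨fun y hy => hBmem y (List.mem_of_mem_head? hy), hBchain⟩
  have hph3 : List.foldl tableauInsert ([a, -a] :: [h₂, e] :: colOf K₁') B
      = [lastD B a, -a] :: [lastD (a :: B).dropLast h₂, e]
          :: colOf (aux (a :: B).dropLast h₂ K₁') := by
    exact phase3 B a (-a) h₂ e K₁' hK₁'chain haBchain hah₂ hK₁'head
  rw [List.foldl_append, hph3]
  have hBlast : lastD B a = -u₀ := by rw [hB, negRev_lastD]
  rw [hBlast]
  set W : List ℝ := (a :: B).dropLast with hW
  set c₂ : ℝ := lastD W h₂ with hc₂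
  set K₂ : List ℝ := aux W h₂ K₁' with hK₂
  have hWne : W ≠ [] := by
    rw [hW]
    intro h
    have h2 := congrArg List.length h
    simp only [List.length_dropLast, List.length_cons, List.length_nil] at h2
    simp [hB] at h2
  have hc₂a : c₂ ≤ a := by
    have hmem : c₂ ∈ W := hc₂ ▸ lastD_mem_of_ne_nil W h₂ hWne
    have : c₂ ∈ a :: B := List.mem_of_mem_dropLast (hW ▸ hmem)
    rcases List.mem_cons.1 this with h | h
    · rw [h]
    · linarith [hBmem c₂ h]
  obtain ⟨k, K₂', hK₂eq⟩ : ∃ k K₂', K₂ = k :: K₂' := by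
    rcases hKe : K₂ with _ | ⟨k, K₂'⟩
    · exfalso
      have : K₂.length = W.length + K₁'.length := aux_length ..
      rw [hKe] at this
      rcases List.exists_cons_of_ne_nil hWne with ⟨w, W', hw⟩
      rw [hw] at this; simp at this
      omega
    · exact ⟨k, K₂', rfl⟩
  have hkmem : k ∈ h₂ :: W := by
    apply aux_head_mem W h₂ K₁' hWne k
    rw [← hK₂, hK₂eq]; rfl
  have hke : ¬ e < k := by
    rw [not_lt]
    rcases List.mem_cons.1 hkmem with h | h
    · rw [h]; linarith
    · have : k ∈ a :: B := List.mem_of_mem_dropLast (hW ▸ h)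
      rcases List.mem_cons.1 this with h' | h'
      · rw [h']; linarith
      · linarith [hBmem k h']
  -- final insertion of -s
  have hfin : tableauInsert ([-u₀, -a] :: [c₂, e] :: colOf K₂) (-s)
      = [-u₀, -s] :: [c₂, -a] :: [k, e] :: colOf K₂' := by
    have h1 : ¬ (-s < -u₀) := by push_neg; linarith
    have h2 : -s < -a := by linarith
    have h3 : ¬ (-a < c₂) := by push_neg; linarith
    have h4 : -a < e := hea
    rw [tableauInsert, rowInsert, if_neg h1]
    simp only [rowInsert, if_pos h2]
    rw [tableauInsert, rowInsert, if_neg h3]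
    simp only [rowInsert, if_pos h4]
    rw [hK₂eq, colPlace k K₂' e hke]
  rw [List.foldl_cons, List.foldl_nil, hfin]
  have hlen : K₂'.length = 2 * u'.length := by
    have h1 : K₂.length = W.length + K₁'.length := aux_length ..
    have h2 : K₁.length = P₂.length + K₀.length := aux_length ..
    have h3 : K₀.length = P₁'.length := by rw [hK₀, aux_length]; simp
    have h4 : P₁'.length + P₂.length = u'.length + 1 := by
      have := congrArg List.length hsplit
      simp [hP'] at this
      omega
    have h5 : W.length = u'.length + 1 := by
      rw [hW]; simp [hB]
    have h6 : K₁.length = K₁'.length + 1 := by rw [hK₁eq]; simp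
    have h7 : K₂.length = K₂'.length + 1 := by rw [hK₂eq]; simp
    omega
  simp [colOf_shape, hlen]
end RSAux

/-- Let `t₁, …, tₙ` be real numbers, congruent to one another modulo `ℤ`, with
`t₂ > t₃ > ⋯ > t_{n−1} > |tₙ|`, and let `t⁻ = (t₁, …, tₙ, −tₙ, …, −t₁)`.  If
`−|tₙ| < t₁ ≤ t₂` then the Robinson–Schensted insertion tableau `P(t⁻)` has shape
`[2², 1^{2n−4}]` or `[2³, 1^{2n−6}]`; if `t₁ ≤ −|tₙ|` then `P(t⁻)` has shape
`[3, 1^{2n−3}]` or `[4, 1^{2n−4}]`. -/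
theorem rs_shape_type_D
    (n : ℕ) (hn : 2 ≤ n) (t : Fin n → ℝ)
    (hcong : ∀ i j : Fin n, ∃ m : ℤ, t i - t j = (m : ℝ))
    (hdec : ∀ i j : Fin n, 1 ≤ (i : ℕ) → i < j → (j : ℕ) < n - 1 → t j < t i)
    (hlast : |t ⟨n - 1, by omega⟩| < t ⟨n - 2, by omega⟩) :
    ((-|t ⟨n - 1, by omega⟩| < t ⟨0, by omega⟩ ∧ t ⟨0, by omega⟩ ≤ t ⟨1, by omega⟩) →
      (RSshape (minusSeq (List.ofFn t)) = 2 :: 2 :: List.replicate (2 * n - 4) 1 ∨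
        RSshape (minusSeq (List.ofFn t)) = 2 :: 2 :: 2 :: List.replicate (2 * n - 6) 1)) ∧
    (t ⟨0, by omega⟩ ≤ -|t ⟨n - 1, by omega⟩| →
      (RSshape (minusSeq (List.ofFn t)) = 3 :: List.replicate (2 * n - 3) 1 ∨
        RSshape (minusSeq (List.ofFn t)) = 4 :: List.replicate (2 * n - 4) 1)) := by
  rcases lt_or_ge n 3 with h2 | h3
  · -- the case n = 2 : both hypotheses are contradictory
    obtain rfl : n = 2 := by omega
    have hl : |t ⟨1, by omega⟩| < t ⟨0, by omega⟩ := hlast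
    constructor
    · rintro ⟨h1, h2'⟩
      exfalso
      have h2'' : t ⟨0, by omega⟩ ≤ t ⟨1, by omega⟩ := h2'
      linarith [le_abs_self (t ⟨1, by omega⟩)]
    · intro h1
      exfalso
      have h1' : t ⟨0, by omega⟩ ≤ -|t ⟨1, by omega⟩| := h1
      linarith [abs_nonneg (t ⟨1, by omega⟩)]
  · -- the main case n ≥ 3
    set v' : List ℝ := List.ofFn (fun i : Fin (n - 3) => t ⟨(i : ℕ) + 2, by omega⟩) with hv'
    have hv'len : v'.length = n - 3 := by simp [hv']
    have hv'get : ∀ (k : ℕ) (h : k < n - 3), v'[k]'(by omega) = t ⟨k + 2, by omega⟩ := by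
      intro k h
      rw [List.getElem_of_eq hv', List.getElem_ofFn]
    -- the decomposition of the word
    have key : List.ofFn t
        = t ⟨0, by omega⟩ :: (t ⟨1, by omega⟩ :: (v' ++ [t ⟨n - 1, by omega⟩])) := by
      apply List.ext_getElem (by simp [hv'len]; omega)
      intro i h1 h2
      rw [List.getElem_ofFn]
      match i, h2 with
      | 0, _ => rfl
      | 1, _ => rfl
      | (j+2), h2 =>
        rw [List.getElem_cons_succ, List.getElem_cons_succ]
        by_cases hj : j < n - 3
        · rw [List.getElem_append_left (by omega)]
          rw [hv'get j hj]
        · have h2' := h2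
          simp only [List.length_cons, List.length_append, List.length_nil, hv'len] at h2'
          have hj' : j = n - 3 := by omega
          rw [List.getElem_append_right (by omega), List.getElem_singleton]
          exact congrArg t (Fin.ext (by simp; try omega))
    -- chain and membership facts
    have hchain : (t ⟨1, by omega⟩ :: v').Chain' (· > ·) := by
      unfold List.Chain'
      rw [List.isChain_iff_getElem]
      intro i hi
      simp only [List.length_cons, hv'len] at hi
      have hgv : ∀ (k : ℕ) (h : k < n - 2),
          (t ⟨1, by omega⟩ :: v')[k]'(by simp [hv'len]; omega) = t ⟨k + 1, by omega⟩ := by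
        intro k h
        match k, h with
        | 0, _ => rfl
        | (m+1), h =>
          rw [List.getElem_cons_succ, hv'get m (by omega)]
      rw [hgv i (by omega), hgv (i+1) (by omega)]
      exact hdec ⟨i + 1, by omega⟩ ⟨i + 2, by omega⟩ (show 1 ≤ i + 1 by omega)
        (show i + 1 < i + 2 by omega) (show i + 2 < n - 1 by omega)
    have hmem : ∀ x ∈ t ⟨1, by omega⟩ :: v', |t ⟨n - 1, by omega⟩| < x := by
      intro x hx
      have hx' : ∃ (k : ℕ) (h : k < n - 2), x = t ⟨k + 1, by omega⟩ := by
        rcases List.mem_cons.1 hx with rfl | hx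
        · exact ⟨0, by omega, rfl⟩
        · rw [hv', List.mem_ofFn] at hx
          obtain ⟨i, rfl⟩ := hx
          exact ⟨(i : ℕ) + 1, by omega, congrArg t (Fin.ext (by simp; try omega))⟩
      obtain ⟨k, hk, rfl⟩ := hx'
      rcases eq_or_lt_of_le (show k + 1 ≤ n - 2 by omega) with heq | hlt
      · have : (⟨k + 1, by omega⟩ : Fin n) = ⟨n - 2, by omega⟩ := Fin.ext (by simp; try omega)
        rw [this]
        exact hlast
      · calc |t ⟨n - 1, by omega⟩| < t ⟨n - 2, by omega⟩ := hlast
          _ < t ⟨k + 1, by omega⟩ := by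
            exact hdec ⟨k + 1, by omega⟩ ⟨n - 2, by omega⟩ (show 1 ≤ k + 1 by omega)
              (show k + 1 < n - 2 by omega) (show n - 2 < n - 1 by omega)
    -- rewrite the word
    have hword : minusSeq (List.ofFn t)
        = [t ⟨0, by omega⟩] ++ (t ⟨1, by omega⟩ :: v') ++ [t ⟨n - 1, by omega⟩]
            ++ [-t ⟨n - 1, by omega⟩] ++ RSAux.negRev (t ⟨1, by omega⟩ :: v')
            ++ [-t ⟨0, by omega⟩] := by
      rw [minusSeq, key]
      simp [RSAux.negRev]
    constructor
    · rintro ⟨h1, h2'⟩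
      have h2'' : t ⟨0, by omega⟩ ≤ t ⟨1, by omega⟩ := h2'
      rcases le_or_gt (t ⟨n - 1, by omega⟩) 0 with ha0 | ha0
      · -- a ≤ 0 : shape 2,2,2
        right
        have h1' : t ⟨n - 1, by omega⟩ < t ⟨0, by omega⟩ := by
          have := h1
          rw [abs_of_nonpos ha0] at this
          linarith
        rw [hword, RSAux.scenario1bc v' (t ⟨1, by omega⟩) (t ⟨n - 1, by omega⟩)
          (t ⟨0, by omega⟩) hchain hmem ha0 h1' h2'']
        rw [hv'len, show 2 * (n - 3) = 2 * n - 6 by omega]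
      · -- a > 0 : shape 2,2
        left
        have h1' : -t ⟨n - 1, by omega⟩ < t ⟨0, by omega⟩ := by
          have := h1
          rw [abs_of_pos ha0] at this
          exact this
        rw [hword, RSAux.scenario1a v' (t ⟨1, by omega⟩) (t ⟨n - 1, by omega⟩)
          (t ⟨0, by omega⟩) hchain hmem ha0 h1' h2'']
        rw [hv'len, show 2 * (n - 3) + 2 = 2 * n - 4 by omega]
    · intro h1
      rcases le_or_gt (t ⟨n - 1, by omega⟩) 0 with ha0 | ha0
      · -- a ≤ 0 : shape 4
        right
        have h1' : t ⟨0, by omega⟩ ≤ t ⟨n - 1, by omega⟩ := by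
          have := h1
          rw [abs_of_nonpos ha0] at this
          linarith
        rw [hword, RSAux.scenario2bc v' (t ⟨1, by omega⟩) (t ⟨n - 1, by omega⟩)
          (t ⟨0, by omega⟩) hchain hmem ha0 h1']
        rw [hv'len, show 2 * (n - 3) + 2 = 2 * n - 4 by omega]
      · -- a > 0 : shape 3
        left
        have h1' : t ⟨0, by omega⟩ ≤ -t ⟨n - 1, by omega⟩ := by
          have := h1
          rw [abs_of_pos ha0] at this
          exact this
        rw [hword, RSAux.scenario2a v' (t ⟨1, by omega⟩) (t ⟨n - 1, by omega⟩)
          (t ⟨0, by omega⟩) hchain hmem ha0 h1']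
        rw [hv'len, show 2 * (n - 3) + 3 = 2 * n - 3 by omega]
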